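/- arXiv:1408.6667 — 2 statements merged into one kernel-verified Lean document; each statement's English description precedes it below -/
import Mathlib

section
/- If X is a normal random variable with mean μ and variance σ² (σ > 0), then E[min{1, e^X}] = Φ(μ/σ) + exp(μ + σ²/2) · Φ(−σ − μ/σ), where Φ is the standard normal cumulative distribution function. -/
open Real MeasureTheory

/-- The standard normal CDF `Φ`. -/
noncomputable def stdNormalCDF (t : ℝ) : ℝ :=
  ∫ u in Set.Iic t, (Real.sqrt (2 * Real.pi))⁻¹ * Real.exp (-u ^ 2 / 2)

lemma gauss_integrable (m : ℝ) {σ : ℝ} (hσ : 0 < σ) :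
    Integrable (fun x : ℝ => (σ * Real.sqrt (2 * Real.pi))⁻¹ *
      Real.exp (-(x - m) ^ 2 / (2 * σ ^ 2))) := by
  have hb : 0 < (2 * σ ^ 2)⁻¹ := by positivity
  have h0 := (integrable_exp_neg_mul_sq hb).comp_sub_right m
  have h : Integrable (fun x : ℝ => Real.exp (-(x - m) ^ 2 / (2 * σ ^ 2))) := by
    refine h0.congr (Filter.Eventually.of_forall fun x => ?_)
    dsimp
    congr 1
    field_simp
  exact h.const_mul _

lemma gauss_cdf (m c : ℝ) {σ : ℝ} (hσ : 0 < σ) :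
    (∫ x in Set.Iic c, (σ * Real.sqrt (2 * Real.pi))⁻¹ *
      Real.exp (-(x - m) ^ 2 / (2 * σ ^ 2))) = stdNormalCDF ((c - m) / σ) := by
  set F : ℝ → ℝ := Set.indicator (Set.Iic c)
    (fun x => (σ * Real.sqrt (2 * Real.pi))⁻¹ * Real.exp (-(x - m) ^ 2 / (2 * σ ^ 2))) with hF
  have h0 : (∫ x in Set.Iic c, (σ * Real.sqrt (2 * Real.pi))⁻¹ *
      Real.exp (-(x - m) ^ 2 / (2 * σ ^ 2))) = ∫ x, F x := by
    rw [hF, integral_indicator measurableSet_Iic]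
  have h1 : (∫ u : ℝ, F (σ * u + m)) = |σ⁻¹| • ∫ x : ℝ, F (x + m) :=
    MeasureTheory.Measure.integral_comp_mul_left (fun x => F (x + m)) σ
  have h2 : (∫ x : ℝ, F (x + m)) = ∫ x : ℝ, F x :=
    integral_add_right_eq_self F m
  have h3 : ∀ u : ℝ, F (σ * u + m) = Set.indicator (Set.Iic ((c - m) / σ))
      (fun u => (σ * Real.sqrt (2 * Real.pi))⁻¹ * Real.exp (-u ^ 2 / 2)) u := by
    intro u
    have hmem : σ * u + m ∈ Set.Iic c ↔ u ∈ Set.Iic ((c - m) / σ) := by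
      simp only [Set.mem_Iic]
      rw [le_div_iff₀ hσ]
      constructor <;> intro h <;> nlinarith
    have hval : -(σ * u + m - m) ^ 2 / (2 * σ ^ 2) = -u ^ 2 / 2 := by
      field_simp
      ring
    rw [hF]
    by_cases hu : u ∈ Set.Iic ((c - m) / σ)
    · rw [Set.indicator_of_mem (hmem.mpr hu), Set.indicator_of_mem hu, hval]
    · rw [Set.indicator_of_notMem (fun hh => hu (hmem.mp hh)), Set.indicator_of_notMem hu]
  have h4 : (∫ u : ℝ, F (σ * u + m)) = ∫ u in Set.Iic ((c - m) / σ),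
      (σ * Real.sqrt (2 * Real.pi))⁻¹ * Real.exp (-u ^ 2 / 2) := by
    rw [← integral_indicator measurableSet_Iic]
    exact integral_congr_ae (Filter.Eventually.of_forall h3)
  have habs : |σ⁻¹| = σ⁻¹ := abs_of_pos (by positivity)
  have hFint : Integrable F := by
    rw [hF]
    exact (gauss_integrable m hσ).indicator measurableSet_Iic
  calc (∫ x in Set.Iic c, (σ * Real.sqrt (2 * Real.pi))⁻¹ *
      Real.exp (-(x - m) ^ 2 / (2 * σ ^ 2)))
      = ∫ x, F x := h0
    _ = σ * (σ⁻¹ * ∫ x, F x) := by field_simp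
    _ = σ * ∫ u : ℝ, F (σ * u + m) := by rw [h1, h2, habs, smul_eq_mul]
    _ = σ * ∫ u in Set.Iic ((c - m) / σ),
        (σ * Real.sqrt (2 * Real.pi))⁻¹ * Real.exp (-u ^ 2 / 2) := by rw [h4]
    _ = ∫ u in Set.Iic ((c - m) / σ),
        σ * ((σ * Real.sqrt (2 * Real.pi))⁻¹ * Real.exp (-u ^ 2 / 2)) :=
      (integral_const_mul σ _).symm
    _ = stdNormalCDF ((c - m) / σ) := by
      unfold stdNormalCDF
      refine setIntegral_congr_fun measurableSet_Iic fun u _ => ?_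
      rw [mul_inv, ← mul_assoc, ← mul_assoc, mul_inv_cancel₀ (ne_of_gt hσ), one_mul]

/-- If `X ~ N(μ, σ²)` then `E[min{1, e^X}] = Φ(μ/σ) + e^{μ+σ²/2} Φ(−σ−μ/σ)`. -/
theorem gaussian_min_exp_expectation (μ σ : ℝ) (hσ : 0 < σ) :
    (∫ x : ℝ, min 1 (Real.exp x) *
        ((σ * Real.sqrt (2 * Real.pi))⁻¹ * Real.exp (-(x - μ) ^ 2 / (2 * σ ^ 2))))
      = stdNormalCDF (μ / σ) + Real.exp (μ + σ ^ 2 / 2) * stdNormalCDF (-σ - μ / σ) := by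
  have hσ2 : (σ : ℝ) ≠ 0 := ne_of_gt hσ
  set g : ℝ → ℝ := fun x => (σ * Real.sqrt (2 * Real.pi))⁻¹ *
    Real.exp (-(x - μ) ^ 2 / (2 * σ ^ 2)) with hg
  set g2 : ℝ → ℝ := fun x => (σ * Real.sqrt (2 * Real.pi))⁻¹ *
    Real.exp (-(x - (μ + σ ^ 2)) ^ 2 / (2 * σ ^ 2)) with hg2
  have key1 : ∀ x ∈ Set.Iic (0 : ℝ),
      min 1 (Real.exp x) * g x = Real.exp (μ + σ ^ 2 / 2) * g2 x := by
    intro x hx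
    rw [Set.mem_Iic] at hx
    have hmin : min 1 (Real.exp x) = Real.exp x :=
      min_eq_right (Real.exp_le_one_iff.mpr hx)
    rw [hmin, hg, hg2]
    dsimp only
    rw [mul_left_comm, ← Real.exp_add, mul_left_comm, ← Real.exp_add]
    congr 1
    field_simp
    ring
  have key2 : ∀ x ∈ Set.Ioi (0 : ℝ), min 1 (Real.exp x) * g x = g x := by
    intro x hx
    rw [Set.mem_Ioi] at hx
    rw [min_eq_left (Real.one_le_exp hx.le), one_mul]
  have hInt1 : IntegrableOn (fun x => min 1 (Real.exp x) * g x) (Set.Iic 0) := by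
    refine (IntegrableOn.congr_fun ?_ (fun x hx => (key1 x hx).symm) measurableSet_Iic)
    exact ((gauss_integrable (μ + σ ^ 2) hσ).const_mul _).integrableOn
  have hInt2 : IntegrableOn (fun x => min 1 (Real.exp x) * g x) (Set.Ioi 0) := by
    refine (IntegrableOn.congr_fun ?_ (fun x hx => (key2 x hx).symm) measurableSet_Ioi)
    exact (gauss_integrable μ hσ).integrableOn
  rw [show (∫ x : ℝ, min 1 (Real.exp x) *
        ((σ * Real.sqrt (2 * Real.pi))⁻¹ * Real.exp (-(x - μ) ^ 2 / (2 * σ ^ 2))))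
      = ∫ x : ℝ, min 1 (Real.exp x) * g x from rfl]
  rw [← intervalIntegral.integral_Iic_add_Ioi hInt1 hInt2]
  have part1 : (∫ x in Set.Iic (0 : ℝ), min 1 (Real.exp x) * g x)
      = Real.exp (μ + σ ^ 2 / 2) * stdNormalCDF (-σ - μ / σ) := by
    rw [setIntegral_congr_fun measurableSet_Iic key1, integral_const_mul]
    have := gauss_cdf (μ + σ ^ 2) 0 hσ
    rw [hg2]
    rw [this]
    congr 1
    field_simp
    ring_nf
  have part2 : (∫ x in Set.Ioi (0 : ℝ), min 1 (Real.exp x) * g x)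
      = stdNormalCDF (μ / σ) := by
    rw [setIntegral_congr_fun measurableSet_Ioi key2]
    have hneg : (∫ x in Set.Iic (0 : ℝ), g (-x)) = ∫ x in Set.Ioi (0 : ℝ), g x := by
      rw [integral_comp_neg_Iic, neg_zero]
    rw [← hneg]
    have hcongr : (∫ x in Set.Iic (0 : ℝ), g (-x)) = ∫ x in Set.Iic (0 : ℝ),
        (σ * Real.sqrt (2 * Real.pi))⁻¹ * Real.exp (-(x - (-μ)) ^ 2 / (2 * σ ^ 2)) := by
      refine setIntegral_congr_fun measurableSet_Iic fun x _ => ?_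
      rw [hg]
      dsimp only
      congr 2
      ring
    rw [hcongr, gauss_cdf (-μ) 0 hσ]
    congr 1
    field_simp
    ring
  rw [part1, part2, add_comm]
end

section
/- For any σ > 0, the identity E[min{1, e^X}] = 2Φ(−σ/2) holds when X ~ N(−σ²/2, σ²), where Φ is the standard normal CDF. -/
set_option maxHeartbeats 1000000


open Real MeasureTheory

lemma my_integral_comp_add_right_Iic (f : ℝ → ℝ) (a d : ℝ) :
    (∫ x in Set.Iic a, f (x + d)) = ∫ x in Set.Iic (a + d), f x := by
  have A : MeasurableEmbedding fun x : ℝ => x + d :=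
    (Homeomorph.addRight d).isClosedEmbedding.measurableEmbedding
  have h := A.setIntegral_map (μ := volume) f (Set.Iic (a + d))
  rw [map_add_right_eq_self] at h
  rw [h]
  congr 1
  rw [Set.preimage_add_const_Iic, add_sub_cancel_right]

lemma my_integral_comp_mul_left_Iic (f : ℝ → ℝ) (a : ℝ) {b : ℝ} (hb : 0 < b) :
    (∫ x in Set.Iic a, f (b * x)) = b⁻¹ • ∫ x in Set.Iic (b * a), f x := by
  have h1 : MeasurableSet (Set.Iic a) := measurableSet_Iic
  have h2 : MeasurableSet (Set.Iic (b * a)) := measurableSet_Iic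
  rw [← integral_indicator h1, ← integral_indicator h2,
    ← abs_of_pos (inv_pos.mpr hb), ← Measure.integral_comp_mul_left]
  congr 1
  ext1 x
  rw [← Set.indicator_comp_right, Set.preimage_const_mul_Iic₀ _ hb,
    mul_div_cancel_left₀ _ hb.ne']
  rfl

/-- If `X ~ N(−σ²/2, σ²)` with `σ > 0`, then `E[min{1, e^X}] = 2Φ(−σ/2)`. -/
theorem gaussian_min_exp_expectation_stationary (σ : ℝ) (hσ : 0 < σ) :
    (∫ x : ℝ, min 1 (Real.exp x) *
        ((σ * Real.sqrt (2 * Real.pi))⁻¹ *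
          Real.exp (-(x + σ ^ 2 / 2) ^ 2 / (2 * σ ^ 2))))
      = 2 * stdNormalCDF (-σ / 2) := by
  have hσ' : σ ≠ 0 := hσ.ne'
  set c : ℝ := (σ * Real.sqrt (2 * Real.pi))⁻¹ with hc
  set h : ℝ → ℝ := fun u => σ⁻¹ * ((Real.sqrt (2 * Real.pi))⁻¹ * Real.exp (-u ^ 2 / 2))
    with hh
  -- Integrability of the density
  have hE : Integrable (fun x : ℝ => c * Real.exp (-(x + σ ^ 2 / 2) ^ 2 / (2 * σ ^ 2))) := by
    apply Integrable.const_mul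
    have h1 : Integrable (fun x : ℝ => Real.exp (-(2 * σ ^ 2)⁻¹ * x ^ 2)) :=
      integrable_exp_neg_mul_sq (by positivity)
    have h2 := h1.comp_add_right (σ ^ 2 / 2)
    refine h2.congr (Filter.Eventually.of_forall fun x => ?_)
    exact congrArg Real.exp (by ring)
  -- Integrability of the full integrand
  have hF : Integrable (fun x : ℝ => min 1 (Real.exp x) *
      (c * Real.exp (-(x + σ ^ 2 / 2) ^ 2 / (2 * σ ^ 2)))) := by
    refine hE.mono ?_ (Filter.Eventually.of_forall fun x => ?_)
    · exact Continuous.aestronglyMeasurable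
        (((continuous_const.min Real.continuous_exp).mul
          (continuous_const.mul (Real.continuous_exp.comp (by fun_prop)))))
    · rw [norm_mul]
      refine mul_le_of_le_one_left (norm_nonneg _) ?_
      rw [Real.norm_eq_abs, abs_of_nonneg (le_min zero_le_one (Real.exp_pos x).le)]
      exact min_le_left _ _
  -- The key integral
  have hJ : (∫ x in Set.Iic (0 : ℝ), h (σ⁻¹ * x - σ / 2)) = stdNormalCDF (-σ / 2) := by
    have h1 : (∫ x in Set.Iic (0 : ℝ), h (σ⁻¹ * x - σ / 2))
        = (σ⁻¹)⁻¹ • ∫ y in Set.Iic (σ⁻¹ * 0), h (y - σ / 2) :=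
      my_integral_comp_mul_left_Iic (fun y => h (y - σ / 2)) 0 (inv_pos.mpr hσ)
    simp only [mul_zero, inv_inv] at h1
    rw [h1]
    have h2 : (∫ y in Set.Iic (0 : ℝ), h (y - σ / 2))
        = ∫ y in Set.Iic (0 + -(σ / 2)), h y := by
      simpa [sub_eq_add_neg] using my_integral_comp_add_right_Iic h 0 (-(σ / 2))
    rw [h2]
    have h3 : (0 : ℝ) + -(σ / 2) = -σ / 2 := by ring
    rw [h3, hh, stdNormalCDF]
    rw [MeasureTheory.integral_const_mul]
    rw [smul_eq_mul, ← mul_assoc, mul_inv_cancel₀ hσ', one_mul]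
  -- split the integral
  rw [← MeasureTheory.integral_add_compl (measurableSet_Iic : MeasurableSet (Set.Iic (0 : ℝ))) hF,
    Set.compl_Iic]
  have hpiece1 : (∫ x in Set.Iic (0 : ℝ), min 1 (Real.exp x) *
      (c * Real.exp (-(x + σ ^ 2 / 2) ^ 2 / (2 * σ ^ 2)))) = stdNormalCDF (-σ / 2) := by
    rw [← hJ]
    refine setIntegral_congr_fun measurableSet_Iic fun x hx => ?_
    have hx0 : x ≤ 0 := hx
    rw [min_eq_right (Real.exp_le_one_iff.mpr hx0)]
    have key : x + -(x + σ ^ 2 / 2) ^ 2 / (2 * σ ^ 2) = -(σ⁻¹ * x - σ / 2) ^ 2 / 2 := by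
      field_simp
      ring
    rw [hc, mul_inv, mul_left_comm, ← Real.exp_add, key]
    simp only [hh]
    ring
  have hpiece2 : (∫ x in Set.Ioi (0 : ℝ), min 1 (Real.exp x) *
      (c * Real.exp (-(x + σ ^ 2 / 2) ^ 2 / (2 * σ ^ 2)))) = stdNormalCDF (-σ / 2) := by
    rw [← hJ]
    have step : (∫ x in Set.Ioi (0 : ℝ), min 1 (Real.exp x) *
        (c * Real.exp (-(x + σ ^ 2 / 2) ^ 2 / (2 * σ ^ 2))))
        = ∫ x in Set.Ioi (0 : ℝ), (fun y => h (σ⁻¹ * y - σ / 2)) (-x) := by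
      refine setIntegral_congr_fun measurableSet_Ioi fun x hx => ?_
      have hx0 : (0 : ℝ) ≤ x := (Set.mem_Ioi.mp hx).le
      rw [min_eq_left (Real.one_le_exp hx0), one_mul]
      have key : -(x + σ ^ 2 / 2) ^ 2 / (2 * σ ^ 2) = -(σ⁻¹ * -x - σ / 2) ^ 2 / 2 := by
        field_simp
        ring
      rw [hc, mul_inv, key]
      simp only [hh]
      ring
    rw [step]
    have hn := integral_comp_neg_Ioi (0 : ℝ) (fun y => h (σ⁻¹ * y - σ / 2))
    rw [neg_zero] at hn
    simpa using hn
  rw [hpiece1, hpiece2]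
  ring
end
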